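/- Suppose ζ is a primitive d-th root of unity (d ≥ 1 minimal with ζ^d = 1) and that m is even or char K = 2. Set x = Σ_{i=0}^{m−1} γ_i^{dm}, y = Σ_{i=0}^{m−1} δ_i^{dm}, and w = Σ_{i=0}^{m−1} (−1)^{id} ∏_{k=1}^{i} (q_k q_{k+1} ⋯ q_{k+d−1})^{-1} γ_i^{d} δ_i^{d} in E(Λ_q). Then x, y and w lie in Z_gr(E(Λ_q)), and w^m = ε x y, where ε = (−1)^{md/2} ∏_{l=1}^{m−1} ∏_{k=1}^{ld} (q_k q_{k+1} ⋯ q_{k+d−1})^{-1} (in characteristic 2 all signs are 1). -/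

import Mathlib

open scoped BigOperators

noncomputable section

/-- Generators of the path algebra: trivial paths `e i`, arrows `a i : i → i+1`
and `abar i : i+1 → i`. -/
inductive Gen (m : ℕ) : Type
  | e : ZMod m → Gen m
  | a : ZMod m → Gen m
  | abar : ZMod m → Gen m

/-- The free associative algebra on the generators. -/
abbrev FA (K : Type) [Field K] (m : ℕ) : Type := FreeAlgebra K (Gen m)

def Ee (K : Type) [Field K] (m : ℕ) (i : ZMod m) : FA K m := FreeAlgebra.ι K (Gen.e i)
def Aa (K : Type) [Field K] (m : ℕ) (i : ZMod m) : FA K m := FreeAlgebra.ι K (Gen.a i)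
def Bb (K : Type) [Field K] (m : ℕ) (i : ZMod m) : FA K m := FreeAlgebra.ι K (Gen.abar i)

/-- The defining relations of the path algebra KQ. -/
inductive PathRel (K : Type) [Field K] (m : ℕ) [NeZero m] : FA K m → FA K m → Prop
  | orth : ∀ i j : ZMod m, i ≠ j → PathRel K m (Ee K m i * Ee K m j) 0
  | idem : ∀ i : ZMod m, PathRel K m (Ee K m i * Ee K m i) (Ee K m i)
  | total : PathRel K m (∑ i : ZMod m, Ee K m i) 1
  | asrc : ∀ i : ZMod m, PathRel K m (Ee K m i * Aa K m i) (Aa K m i)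
  | atgt : ∀ i : ZMod m, PathRel K m (Aa K m i * Ee K m (i + 1)) (Aa K m i)
  | bsrc : ∀ i : ZMod m, PathRel K m (Ee K m (i + 1) * Bb K m i) (Bb K m i)
  | btgt : ∀ i : ZMod m, PathRel K m (Bb K m i * Ee K m i) (Bb K m i)

/-- The path algebra KQ. -/
abbrev PathAlg (K : Type) [Field K] (m : ℕ) [NeZero m] : Type := RingQuot (PathRel K m)

def pe (K : Type) [Field K] (m : ℕ) [NeZero m] (i : ZMod m) : PathAlg K m :=
  RingQuot.mkAlgHom K (PathRel K m) (Ee K m i)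
def pa (K : Type) [Field K] (m : ℕ) [NeZero m] (i : ZMod m) : PathAlg K m :=
  RingQuot.mkAlgHom K (PathRel K m) (Aa K m i)
def pb (K : Type) [Field K] (m : ℕ) [NeZero m] (i : ZMod m) : PathAlg K m :=
  RingQuot.mkAlgHom K (PathRel K m) (Bb K m i)

/-- The relations defining the Koszul dual (Ext algebra) of `Λ_q`:
`q_i⁻¹ a_i ā_i + ā_{i-1} a_{i-1} = 0`. -/
inductive ExtRel (K : Type) [Field K] (m : ℕ) [NeZero m] (q : ZMod m → K) :
    PathAlg K m → PathAlg K m → Prop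
  | rel : ∀ i : ZMod m,
      ExtRel K m q ((q i)⁻¹ • (pa K m i * pb K m i) + pb K m (i - 1) * pa K m (i - 1)) 0

/-- The Ext algebra `E(Λ_q)`. -/
abbrev ExtAlg (K : Type) [Field K] (m : ℕ) [NeZero m] (q : ZMod m → K) : Type :=
  RingQuot (ExtRel K m q)

def xe (K : Type) [Field K] (m : ℕ) [NeZero m] (q : ZMod m → K) (i : ZMod m) :
    ExtAlg K m q := RingQuot.mkAlgHom K (ExtRel K m q) (pe K m i)
def xa (K : Type) [Field K] (m : ℕ) [NeZero m] (q : ZMod m → K) (i : ZMod m) :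
    ExtAlg K m q := RingQuot.mkAlgHom K (ExtRel K m q) (pa K m i)
def xb (K : Type) [Field K] (m : ℕ) [NeZero m] (q : ZMod m → K) (i : ZMod m) :
    ExtAlg K m q := RingQuot.mkAlgHom K (ExtRel K m q) (pb K m i)

/-- `γ_i^n`, the image of the path `a_i a_{i+1} ⋯ a_{i+n-1}` in `E(Λ_q)`. -/
def gam (K : Type) [Field K] (m : ℕ) [NeZero m] (q : ZMod m → K) (i : ZMod m) :
    ℕ → ExtAlg K m q
  | 0 => xe K m q i
  | n + 1 => xa K m q i * gam K m q (i + 1) n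

/-- `δ_i^n`, the image of the path `ā_{i+n-1} ⋯ ā_{i+1} ā_i` in `E(Λ_q)`. -/
def del (K : Type) [Field K] (m : ℕ) [NeZero m] (q : ZMod m → K) (i : ZMod m) :
    ℕ → ExtAlg K m q
  | 0 => xe K m q i
  | n + 1 => xb K m q (i + (n : ZMod m)) * del K m q i n

/-- Homogeneity of path-length degree `n` in `E(Λ_q)`: membership in the span of
the (images of) paths of length `n`, i.e. of the monomials `γ_i^s δ_j^t` with `s + t = n`. -/
def Homog (K : Type) [Field K] (m : ℕ) [NeZero m] (q : ZMod m → K) (n : ℕ)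
    (z : ExtAlg K m q) : Prop :=
  z ∈ Submodule.span K
    {x : ExtAlg K m q | ∃ (i j : ZMod m) (s t : ℕ), s + t = n ∧ x = gam K m q i s * del K m q j t}

/-- The graded centre of `E(Λ_q)`: the subalgebra generated by all homogeneous elements `z`
of degree `n` such that `z g = (-1)^{n n'} g z` for all homogeneous `g` of degree `n'`. -/
def ZGr (K : Type) [Field K] (m : ℕ) [NeZero m] (q : ZMod m → K) :
    Subalgebra K (ExtAlg K m q) :=
  Algebra.adjoin K
    {z : ExtAlg K m q | ∃ n : ℕ, Homog K m q n z ∧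
      ∀ (n' : ℕ) (g : ExtAlg K m q), Homog K m q n' g →
        z * g = ((-1 : K) ^ (n * n')) • (g * z)}

/-- The product `q_k q_{k+1} ⋯ q_{k+len-1}` (subscripts modulo `m`). -/
def qblock (K : Type) [Field K] (m : ℕ) [NeZero m] (q : ZMod m → K) (k len : ℕ) : K :=
  ∏ j ∈ Finset.range len, q ((k + j : ℕ) : ZMod m)

/-- The coefficient `∏_{k=1}^{i} (q_k ⋯ q_{k+len-1})⁻¹`. -/
def wcoef (K : Type) [Field K] (m : ℕ) [NeZero m] (q : ZMod m → K) (i len : ℕ) : K :=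
  ∏ k ∈ Finset.Icc 1 i, (qblock K m q k len)⁻¹

namespace CE
variable {K : Type} [Field K] {m : ℕ} [NeZero m]

def e (q : ZMod m → K) (i : ZMod m) : ExtAlg K m q := xe K m q i
def A (q : ZMod m → K) (i : ZMod m) : ExtAlg K m q := xa K m q i
def B (q : ZMod m → K) (i : ZMod m) : ExtAlg K m q := xb K m q i
def G (q : ZMod m → K) (i : ZMod m) (s : ℕ) : ExtAlg K m q := gam K m q i s
def D (q : ZMod m → K) (i : ZMod m) (t : ℕ) : ExtAlg K m q := del K m q i t

variable (q : ZMod m → K)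

lemma G_zero (i : ZMod m) : G q i 0 = e q i := rfl
lemma G_succ (i : ZMod m) (s : ℕ) : G q i (s+1) = A q i * G q (i+1) s := rfl
lemma D_zero (i : ZMod m) : D q i 0 = e q i := rfl
lemma D_succ (i : ZMod m) (t : ℕ) : D q i (t+1) = B q (i + (t : ZMod m)) * D q i t := rfl

private lemma lift {x y : FA K m} (h : PathRel K m x y) :
    RingQuot.mkAlgHom K (ExtRel K m q) (RingQuot.mkAlgHom K (PathRel K m) x)
      = RingQuot.mkAlgHom K (ExtRel K m q) (RingQuot.mkAlgHom K (PathRel K m) y) := by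
  rw [RingQuot.mkAlgHom_rel K h]

lemma ee_ne {i j : ZMod m} (h : i ≠ j) : e q i * e q j = 0 := by
  have := lift q (PathRel.orth i j h)
  simpa [e, xe, pe, map_mul, map_zero] using this

lemma ee (i : ZMod m) : e q i * e q i = e q i := by
  have := lift q (PathRel.idem i)
  simpa [e, xe, pe, map_mul] using this

lemma eA (i : ZMod m) : e q i * A q i = A q i := by
  have := lift q (PathRel.asrc (K := K) (m := m) i)
  simpa [e, A, xe, xa, pe, pa, map_mul] using this

lemma Ae (i : ZMod m) : A q i * e q (i+1) = A q i := by
  have := lift q (PathRel.atgt (K := K) (m := m) i)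
  simpa [e, A, xe, xa, pe, pa, map_mul] using this

lemma eB (i : ZMod m) : e q (i+1) * B q i = B q i := by
  have := lift q (PathRel.bsrc (K := K) (m := m) i)
  simpa [e, B, xe, xb, pe, pb, map_mul] using this

lemma Be (i : ZMod m) : B q i * e q i = B q i := by
  have := lift q (PathRel.btgt (K := K) (m := m) i)
  simpa [e, B, xe, xb, pe, pb, map_mul] using this

lemma eA_ne {j i : ZMod m} (h : j ≠ i) : e q j * A q i = 0 := by
  rw [← eA q i, ← mul_assoc, ee_ne q h, zero_mul]

lemma Ae_ne {j i : ZMod m} (h : j ≠ i + 1) : A q i * e q j = 0 := by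
  rw [← Ae q i, mul_assoc, ee_ne q (Ne.symm h), mul_zero]

lemma eB_ne {j i : ZMod m} (h : j ≠ i + 1) : e q j * B q i = 0 := by
  rw [← eB q i, ← mul_assoc, ee_ne q h, zero_mul]

lemma Be_ne {j i : ZMod m} (h : j ≠ i) : B q i * e q j = 0 := by
  rw [← Be q i, mul_assoc, ee_ne q (Ne.symm h), mul_zero]

lemma BA (i : ZMod m) : B q i * A q i = (-(q (i+1))⁻¹) • (A q (i+1) * B q (i+1)) := by
  have h := RingQuot.mkAlgHom_rel K (ExtRel.rel (K := K) (m := m) (q := q) (i+1))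
  simp only [map_add, map_mul, map_smul, map_zero, add_sub_cancel_right] at h
  have h0 : (q (i+1))⁻¹ • (A q (i+1) * B q (i+1)) + B q i * A q i = 0 := by
    simpa [A, B, xa, xb] using h
  have h2 := neg_eq_of_add_eq_zero_right (a := (q (i+1))⁻¹ • (A q (i+1) * B q (i+1))) (b := B q i * A q i) h0
  exact h2.symm.trans (neg_smul ((q (i+1))⁻¹) (A q (i+1) * B q (i+1))).symm

end CE

set_option linter.unusedSectionVars false
namespace CE
variable {K : Type} [Field K] {m : ℕ} [NeZero m] (q : ZMod m → K)

lemma key_cast (i : ZMod m) (s : ℕ) : i + ((s+1 : ℕ) : ZMod m) = (i + 1) + (s : ZMod m) := by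
  push_cast; ring

lemma eG (i : ZMod m) (s : ℕ) : e q i * G q i s = G q i s := by
  cases s with
  | zero => exact ee q i
  | succ s => rw [G_succ, ← mul_assoc, eA]

lemma eG_ne {j i : ZMod m} (h : j ≠ i) (s : ℕ) : e q j * G q i s = 0 := by
  cases s with
  | zero => exact ee_ne q h
  | succ s => rw [G_succ, ← mul_assoc, eA_ne q h, zero_mul]

lemma Ge (i : ZMod m) (s : ℕ) : G q i s * e q (i + (s : ZMod m)) = G q i s := by
  induction s generalizing i with
  | zero => simpa [G_zero] using ee q i
  | succ s ih => rw [key_cast, G_succ, mul_assoc, ih]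

lemma Ge_ne {j i : ZMod m} {s : ℕ} (h : j ≠ i + (s : ZMod m)) : G q i s * e q j = 0 := by
  induction s generalizing i with
  | zero => exact ee_ne q (Ne.symm (by simpa using h))
  | succ s ih =>
      rw [G_succ, mul_assoc, ih (by rw [key_cast] at h; exact h), mul_zero]

lemma eD (i : ZMod m) (t : ℕ) : e q (i + (t : ZMod m)) * D q i t = D q i t := by
  cases t with
  | zero => simpa [D_zero] using ee q i
  | succ t =>
      rw [D_succ, ← mul_assoc]
      rw [show i + ((t+1 : ℕ) : ZMod m) = (i + (t : ZMod m)) + 1 by push_cast; ring, eB]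

lemma eD_ne {j i : ZMod m} {t : ℕ} (h : j ≠ i + (t : ZMod m)) : e q j * D q i t = 0 := by
  cases t with
  | zero => rw [D_zero, ee_ne q (by simpa using h)]
  | succ t =>
      rw [D_succ, ← mul_assoc,
        eB_ne q (by rwa [show (i + (t : ZMod m)) + 1 = i + ((t+1 : ℕ) : ZMod m) by push_cast; ring]),
        zero_mul]

lemma De (i : ZMod m) (t : ℕ) : D q i t * e q i = D q i t := by
  induction t with
  | zero => exact ee q i
  | succ t ih => rw [D_succ, mul_assoc, ih]

lemma De_ne {j i : ZMod m} {t : ℕ} (h : j ≠ i) : D q i t * e q j = 0 := by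
  induction t with
  | zero => exact ee_ne q (Ne.symm h)
  | succ t ih => rw [D_succ, mul_assoc, ih, mul_zero]

lemma GG (i : ZMod m) (s s' : ℕ) : G q i s * G q (i + (s : ZMod m)) s' = G q i (s + s') := by
  induction s generalizing i with
  | zero => simpa [G_zero] using eG q i s'
  | succ s ih =>
      rw [key_cast, G_succ, mul_assoc, ih]
      rw [show s + 1 + s' = (s + s') + 1 by omega, G_succ]

lemma GG' {i j : ZMod m} {s : ℕ} (h : j = i + (s : ZMod m)) (s' : ℕ) :
    G q i s * G q j s' = G q i (s + s') := by subst h; exact GG q i s s'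

lemma GG_ne {i j : ZMod m} {s : ℕ} (h : j ≠ i + (s : ZMod m)) (s' : ℕ) :
    G q i s * G q j s' = 0 := by
  conv_lhs => rw [← Ge q i s, ← eG q j s']
  rw [mul_assoc, ← mul_assoc (e q (i + (s : ZMod m))), ee_ne q (Ne.symm h), zero_mul, mul_zero]

lemma DD (i : ZMod m) (t t' : ℕ) : D q (i + (t : ZMod m)) t' * D q i t = D q i (t + t') := by
  induction t' with
  | zero => exact eD q i t
  | succ t' ih =>
      rw [D_succ, mul_assoc, ih,
        show (i + (t : ZMod m)) + (t' : ZMod m) = i + ((t + t' : ℕ) : ZMod m) by push_cast; ring,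
        show t + (t' + 1) = (t + t') + 1 by omega, D_succ]

lemma DD' {i j : ZMod m} {t : ℕ} (h : j = i + (t : ZMod m)) (t' : ℕ) :
    D q j t' * D q i t = D q i (t + t') := by subst h; exact DD q i t t'

lemma DD_ne {i j : ZMod m} {t : ℕ} (h : j ≠ i + (t : ZMod m)) (t' : ℕ) :
    D q j t' * D q i t = 0 := by
  conv_lhs => rw [← De q j t', ← eD q i t]
  rw [mul_assoc, ← mul_assoc (e q j), ee_ne q h, zero_mul, mul_zero]

/-- single-swap coefficient -/
def csw1 (j : ZMod m) (s : ℕ) : K := (-1)^s * ∏ k ∈ Finset.range s, (q (j + (k : ZMod m) + 1))⁻¹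

/-- multi-swap coefficient -/
def csw (i : ZMod m) (s t : ℕ) : K := ∏ l ∈ Finset.range t, csw1 q (i + (l : ZMod m)) s

lemma csw1_succ (j : ZMod m) (s : ℕ) :
    csw1 q j (s+1) = (-(q (j+1))⁻¹) * csw1 q (j+1) s := by
  rw [csw1, csw1, Finset.prod_range_succ']
  have h1 : ∀ k : ℕ, (q (j + ((k+1 : ℕ) : ZMod m) + 1))⁻¹ = (q ((j + 1) + (k : ZMod m) + 1))⁻¹ :=
    fun k => by rw [show j + ((k+1 : ℕ) : ZMod m) + 1 = (j + 1) + (k : ZMod m) + 1 by push_cast; ring]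
  simp only [h1, Nat.cast_zero, add_zero]
  ring

lemma BG (j : ZMod m) (s : ℕ) :
    B q j * G q j s = csw1 q j s • (G q (j+1) s * B q (j + (s : ZMod m))) := by
  induction s generalizing j with
  | zero =>
      simp only [G_zero, Nat.cast_zero, add_zero, Be, csw1, pow_zero, Finset.range_zero,
        Finset.prod_empty, mul_one, one_smul, eB]
  | succ s ih =>
      rw [G_succ, ← mul_assoc, BA, csw1_succ]
      rw [smul_mul_assoc, mul_assoc, ih, mul_smul_comm, smul_smul]
      congr 1
      rw [key_cast, G_succ, mul_assoc]

lemma DG (i : ZMod m) (s t : ℕ) :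
    D q i t * G q i s = csw q i s t • (G q (i + (t : ZMod m)) s * D q (i + (s : ZMod m)) t) := by
  induction t with
  | zero =>
      simp only [D_zero, Nat.cast_zero, add_zero, eG, csw, Finset.range_zero, Finset.prod_empty,
        one_smul, Ge]
  | succ t ih =>
      rw [D_succ, mul_assoc, ih, mul_smul_comm, ← mul_assoc, BG, smul_mul_assoc, smul_smul]
      have hc : csw q i s t * csw1 q (i + (t : ZMod m)) s = csw q i s (t+1) := by
        rw [csw, csw, Finset.prod_range_succ]
      rw [hc]
      congr 1
      rw [mul_assoc,
        show (i + (t : ZMod m)) + (s : ZMod m) = (i + (s : ZMod m)) + (t : ZMod m) by ring,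
        ← D_succ, key_cast,
        show (i + (t : ZMod m)) + 1 = (i + 1) + (t : ZMod m) by ring]

lemma DG_ne {i j : ZMod m} (h : j ≠ i) (s t : ℕ) : D q j t * G q i s = 0 := by
  conv_lhs => rw [← De q j t, ← eG q i s]
  rw [mul_assoc, ← mul_assoc (e q j), ee_ne q h, zero_mul, mul_zero]

lemma GD_ne {i j : ZMod m} {s t : ℕ} (h : i + (s : ZMod m) ≠ j + (t : ZMod m)) :
    G q i s * D q j t = 0 := by
  conv_lhs => rw [← Ge q i s, ← eD q j t]
  rw [mul_assoc, ← mul_assoc (e q (i + (s : ZMod m))), ee_ne q h, zero_mul, mul_zero]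

/-- block product as function of ZMod index -/
def qb (q : ZMod m → K) (z : ZMod m) (d : ℕ) : K := ∏ l ∈ Finset.range d, q (z + (l : ZMod m))

def Qb (q : ZMod m → K) (d k : ℕ) : K := (qb q ((k+1 : ℕ) : ZMod m) d)⁻¹

def Cf (q : ZMod m → K) (d n : ℕ) : K := (-1:K)^(n*d) * ∏ k ∈ Finset.range n, Qb q d k

def lam (q : ZMod m → K) (d : ℕ) (v : ZMod m) : K :=
  (-1:K)^(v.val * d) * wcoef K m q v.val d

lemma prod_shift (c : ZMod m) (f : ZMod m → K) :
    ∏ k ∈ Finset.range m, f (c + (k : ZMod m)) = ∏ i : ZMod m, f i := by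
  refine Finset.prod_nbij' (i := fun k => c + (k : ZMod m)) (j := fun z => (z - c).val)
    (fun a _ => Finset.mem_univ _) (fun b _ => Finset.mem_range.2 (ZMod.val_lt _)) ?_ ?_ ?_
  · intro a ha
    show (c + (a : ZMod m) - c).val = a
    rw [show c + (a : ZMod m) - c = (a : ZMod m) by ring]
    exact ZMod.val_cast_of_lt (Finset.mem_range.1 ha)
  · intro b _
    show c + (((b - c).val : ℕ) : ZMod m) = b
    rw [ZMod.natCast_val, ZMod.cast_id]; ring
  · intro a _; rfl

lemma prod_univ_shift (c : ZMod m) (f : ZMod m → K) :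
    ∏ z : ZMod m, f (z + c) = ∏ z : ZMod m, f z :=
  Equiv.prod_comp (Equiv.addRight c) f

lemma prod_shift_mul (c : ZMod m) (f : ZMod m → K) (d : ℕ) :
    ∏ k ∈ Finset.range (d * m), f (c + (k : ZMod m)) = (∏ i : ZMod m, f i)^d := by
  induction d with
  | zero => simp
  | succ d ih =>
      rw [show (d+1) * m = d * m + m by ring, Finset.prod_range_add, ih]
      have h2 : ∀ x : ℕ, f (c + ((d * m + x : ℕ) : ZMod m))
          = f ((c + ((d*m : ℕ) : ZMod m)) + (x : ZMod m)) := by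
        intro x; congr 1; push_cast; ring
      rw [Finset.prod_congr rfl (fun x _ => h2 x), prod_shift (c + ((d*m : ℕ) : ZMod m)) f,
        pow_succ]

lemma hsgn (hcase : Even m ∨ ringChar K = 2) : (-1:K)^m = 1 := by
  rcases hcase with h | h
  · exact h.neg_one_pow
  · have h2 : ((2:ℕ):K) = 0 := by rw [← h]; exact ringChar.Nat.cast_ringChar
    have h3 : (2:K) = 0 := by exact_mod_cast h2
    have hn : (-1:K) = 1 := by linear_combination -h3
    rw [hn, one_pow]

lemma sgn_mul_m (hcase : Even m ∨ ringChar K = 2) (n : ℕ) : (-1:K)^(m*n) = 1 := by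
  rw [pow_mul, hsgn hcase, one_pow]

section
variable (d : ℕ)

lemma qb_prod_one (hζ1 : (∏ i : ZMod m, q i)^d = 1) : ∏ z : ZMod m, qb q z d = 1 := by
  unfold qb
  rw [Finset.prod_comm]
  calc ∏ l ∈ Finset.range d, ∏ z : ZMod m, q (z + (l : ZMod m))
      = ∏ l ∈ Finset.range d, ∏ z : ZMod m, q z :=
        Finset.prod_congr rfl (fun l _ => prod_univ_shift ((l : ZMod m)) q)
    _ = (∏ i : ZMod m, q i)^d := by rw [Finset.prod_const, Finset.card_range]
    _ = 1 := hζ1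

variable (hcase : Even m ∨ ringChar K = 2) (hζ1 : (∏ i : ZMod m, q i)^d = 1)
include hcase hζ1

lemma csw1_dm (j : ZMod m) : csw1 q j (d*m) = 1 := by
  rw [csw1]
  have h1 : (-1:K)^(d*m) = 1 := by rw [show d*m = m*d by ring]; exact sgn_mul_m hcase d
  have h2 : ∀ k : ℕ, (q (j + (k:ZMod m) + 1))⁻¹ = (fun z => (q z)⁻¹) ((j+1) + (k:ZMod m)) := by
    intro k; show _ = (q ((j+1) + (k:ZMod m)))⁻¹; congr 2; ring
  rw [h1, one_mul, Finset.prod_congr rfl (fun k _ => h2 k),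
    prod_shift_mul (j+1) (fun z => (q z)⁻¹) d, Finset.prod_inv_distrib, inv_pow, hζ1, inv_one]

lemma csw_dm_left (i : ZMod m) (t : ℕ) : csw q i (d*m) t = 1 := by
  rw [csw]
  exact Finset.prod_eq_one (fun l _ => csw1_dm q d hcase hζ1 (i + (l : ZMod m)))

lemma csw_dm_right (i : ZMod m) (s : ℕ) : csw q i s (d*m) = 1 := by
  rw [csw]
  simp only [csw1]
  rw [Finset.prod_mul_distrib, Finset.prod_const, Finset.card_range, ← pow_mul,
    show s * (d*m) = m * (s*d) by ring, sgn_mul_m hcase, one_mul, Finset.prod_comm]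
  refine Finset.prod_eq_one (fun k _ => ?_)
  have h2 : ∀ l : ℕ, (q (i + (l:ZMod m) + (k:ZMod m) + 1))⁻¹
      = (fun z => (q z)⁻¹) ((i + (k:ZMod m) + 1) + (l:ZMod m)) := by
    intro l; show _ = (q ((i + (k:ZMod m) + 1) + (l:ZMod m)))⁻¹; congr 2; ring
  rw [Finset.prod_congr rfl (fun l _ => h2 l),
    prod_shift_mul (i + (k:ZMod m) + 1) (fun z => (q z)⁻¹) d,
    Finset.prod_inv_distrib, inv_pow, hζ1, inv_one]

end

lemma Icc_prod (f : ℕ → K) (n : ℕ) : ∏ k ∈ Finset.Icc 1 n, f k = ∏ k ∈ Finset.range n, f (k+1) := by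
  induction n with
  | zero => rw [Finset.Icc_eq_empty (by omega), Finset.prod_empty, Finset.range_zero,
      Finset.prod_empty]
  | succ n ih => rw [Finset.prod_Icc_succ_top (by omega), ih, Finset.prod_range_succ]

lemma qblock_eq (q : ZMod m → K) (k d : ℕ) : qblock K m q k d = qb q ((k : ℕ) : ZMod m) d := by
  unfold qblock qb
  exact Finset.prod_congr rfl (fun j _ => by push_cast; ring_nf)

lemma wcoef_eq (q : ZMod m → K) (d n : ℕ) : wcoef K m q n d = ∏ k ∈ Finset.range n, Qb q d k := by
  unfold wcoef
  rw [Icc_prod]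
  exact Finset.prod_congr rfl (fun k _ => by rw [Qb, qblock_eq])

lemma lam_eq (q : ZMod m → K) (d : ℕ) (v : ZMod m) : lam q d v = Cf q d v.val := by
  rw [lam, Cf, wcoef_eq]

lemma csw_sd (q : ZMod m → K) (d : ℕ) (u : ZMod m) (s : ℕ) :
    csw q u s d = (-1:K)^(s*d) * ∏ k ∈ Finset.range s, (qb q (u + (k:ZMod m) + 1) d)⁻¹ := by
  rw [csw]
  simp only [csw1]
  rw [Finset.prod_mul_distrib, Finset.prod_const, Finset.card_range, ← pow_mul, Finset.prod_comm]
  congr 1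
  refine Finset.prod_congr rfl (fun k _ => ?_)
  rw [qb, ← Finset.prod_inv_distrib]
  exact Finset.prod_congr rfl (fun l _ => by congr 2; ring)

lemma csw_ds (q : ZMod m → K) (d : ℕ) (v : ZMod m) (t : ℕ) :
    csw q v d t = (-1:K)^(d*t) * ∏ l ∈ Finset.range t, (qb q (v + (l:ZMod m) + 1) d)⁻¹ := by
  rw [csw]
  simp only [csw1]
  rw [Finset.prod_mul_distrib, Finset.prod_const, Finset.card_range, ← pow_mul]
  congr 1
  refine Finset.prod_congr rfl (fun l _ => ?_)
  rw [qb, ← Finset.prod_inv_distrib]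
  exact Finset.prod_congr rfl (fun k _ => by congr 2; ring)

lemma lam_csw_core (q : ZMod m → K) (d : ℕ) (v : ZMod m) (t : ℕ) :
    lam q d v * ((-1:K)^(d*t) * ∏ l ∈ Finset.range t, (qb q (v + (l:ZMod m) + 1) d)⁻¹)
      = Cf q d (v.val + t) := by
  rw [lam, wcoef_eq, Cf]
  have h1 : ∀ l : ℕ, (qb q (v + (l:ZMod m) + 1) d)⁻¹ = Qb q d (v.val + l) := by
    intro l
    rw [Qb]
    congr 2
    push_cast
    rw [ZMod.natCast_val, ZMod.cast_id]
  rw [Finset.prod_congr rfl (fun l _ => h1 l), Finset.prod_range_add (Qb q d) v.val t,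
    show (v.val + t) * d = v.val * d + d * t by ring, pow_add]
  ring

lemma lam_csw_ds (q : ZMod m → K) (d : ℕ) (v : ZMod m) (t : ℕ) :
    lam q d v * csw q v d t = Cf q d (v.val + t) := by
  rw [csw_ds]; exact lam_csw_core q d v t

lemma lam_csw_sd (q : ZMod m → K) (d : ℕ) (u : ZMod m) (s : ℕ) :
    lam q d u * csw q u s d = Cf q d (u.val + s) := by
  rw [csw_sd, show s * d = d * s by ring]; exact lam_csw_core q d u s

section
variable (q : ZMod m → K) (d : ℕ)
variable (hcase : Even m ∨ ringChar K = 2) (hζ1 : (∏ i : ZMod m, q i)^d = 1)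
include hcase hζ1

lemma Cf_add_m (n : ℕ) : Cf q d (n + m) = Cf q d n := by
  rw [Cf, Cf, Finset.prod_range_add, show (n+m)*d = n*d + m*d by ring, pow_add,
    sgn_mul_m hcase d]
  have h1 : ∀ k : ℕ, Qb q d (n + k) = (fun z => (qb q z d)⁻¹) (((n+1 : ℕ) : ZMod m) + (k : ZMod m)) := by
    intro k
    show _ = (qb q (((n+1 : ℕ) : ZMod m) + (k : ZMod m)) d)⁻¹
    rw [Qb]
    congr 2
    push_cast; ring
  rw [Finset.prod_congr rfl (fun k _ => h1 k), prod_shift (((n+1 : ℕ)) : ZMod m) (fun z => (qb q z d)⁻¹),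
    Finset.prod_inv_distrib, qb_prod_one q d hζ1, inv_one]
  ring

lemma Cf_mod (n : ℕ) : Cf q d n = Cf q d (n % m) := by
  induction n using Nat.strong_induction_on with
  | _ n ih =>
    by_cases h : n < m
    · rw [Nat.mod_eq_of_lt h]
    · have hm0 : 0 < m := Nat.pos_of_ne_zero (NeZero.ne m)
      have h1 : n = (n - m) + m := by omega
      rw [h1, Cf_add_m q d hcase hζ1, ih (n - m) (by omega), Nat.add_mod_right]

lemma Cf_congr {n n' : ℕ} (h : (n : ZMod m) = (n' : ZMod m)) : Cf q d n = Cf q d n' := by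
  have hmod : n % m = n' % m := (ZMod.natCast_eq_natCast_iff n n' m).1 h
  rw [Cf_mod q d hcase hζ1 n, Cf_mod q d hcase hζ1 n', hmod]

end

section
variable (q : ZMod m → K) (d : ℕ)

def XX : ExtAlg K m q := ∑ i : ZMod m, G q i (d*m)
def YY : ExtAlg K m q := ∑ i : ZMod m, D q i (d*m)
def WW : ExtAlg K m q := ∑ i : ZMod m, lam q d i • (G q i d * D q i d)

lemma dm0 : ((d * m : ℕ) : ZMod m) = 0 := by
  push_cast [ZMod.natCast_self]; ring

lemma dms (s : ℕ) : ((d * m + s : ℕ) : ZMod m) = (s : ZMod m) := by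
  push_cast [ZMod.natCast_self]; ring

variable (hcase : Even m ∨ ringChar K = 2) (hζ1 : (∏ i : ZMod m, q i)^d = 1)
include hcase hζ1

lemma X_comm (u v : ZMod m) (s t : ℕ) :
    XX q d * (G q u s * D q v t) = (G q u s * D q v t) * XX q d := by
  have h0 := dm0 (m := m) d
  have lhs : XX q d * (G q u s * D q v t) = G q u (d*m + s) * D q v t := by
    rw [XX, Finset.sum_mul, Finset.sum_eq_single u ?_ ?_]
    · rw [← mul_assoc, GG' q (show (u:ZMod m) = u + ((d*m : ℕ) : ZMod m) by rw [h0, add_zero]) s]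
    · intro i _ hne
      rw [← mul_assoc,
        GG_ne q (show u ≠ i + ((d*m : ℕ):ZMod m) by rw [h0, add_zero]; exact Ne.symm hne) s,
        zero_mul]
    · intro h; exact absurd (Finset.mem_univ u) h
  have rhs : (G q u s * D q v t) * XX q d
      = G q u s * (G q (v + (t : ZMod m)) (d*m) * D q v t) := by
    rw [XX, Finset.mul_sum, Finset.sum_eq_single v ?_ ?_]
    · rw [mul_assoc, DG q v (d*m) t, csw_dm_left q d hcase hζ1, one_smul, h0, add_zero]
    · intro i _ hne
      rw [mul_assoc, DG_ne q (Ne.symm hne), mul_zero]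
    · intro h; exact absurd (Finset.mem_univ v) h
  rw [lhs, rhs]
  by_cases hvt : v + (t : ZMod m) = u + (s : ZMod m)
  · rw [← mul_assoc, GG' q hvt (d*m), Nat.add_comm (d*m) s]
  · rw [← mul_assoc, GG_ne q hvt (d*m), zero_mul,
      GD_ne q (show u + ((d*m+s : ℕ) : ZMod m) ≠ v + (t:ZMod m) by
        rw [dms (m := m) d s]; exact fun hh => hvt hh.symm)]

lemma Y_comm (u v : ZMod m) (s t : ℕ) :
    YY q d * (G q u s * D q v t) = (G q u s * D q v t) * YY q d := by
  have h0 := dm0 (m := m) d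
  have lhs : YY q d * (G q u s * D q v t)
      = (G q u s * D q (u + (s : ZMod m)) (d*m)) * D q v t := by
    rw [YY, Finset.sum_mul, Finset.sum_eq_single u ?_ ?_]
    · rw [← mul_assoc, DG q u s (d*m), csw_dm_right q d hcase hζ1, one_smul, h0, add_zero]
    · intro i _ hne
      rw [← mul_assoc, DG_ne q hne, zero_mul]
    · intro h; exact absurd (Finset.mem_univ u) h
  have rhs : (G q u s * D q v t) * YY q d = G q u s * D q v (d*m + t) := by
    rw [YY, Finset.mul_sum, Finset.sum_eq_single v ?_ ?_]
    · rw [mul_assoc, DD' q (show (v : ZMod m) = v + ((d*m : ℕ):ZMod m) by rw [h0, add_zero]) t]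
    · intro i _ hne
      rw [mul_assoc,
        DD_ne q (show v ≠ i + ((d*m : ℕ):ZMod m) by rw [h0, add_zero]; exact Ne.symm hne) t,
        mul_zero]
    · intro h; exact absurd (Finset.mem_univ v) h
  rw [lhs, rhs]
  by_cases hvt : u + (s : ZMod m) = v + (t : ZMod m)
  · rw [mul_assoc, DD' q hvt (d*m), Nat.add_comm t (d*m)]
  · rw [mul_assoc, DD_ne q hvt (d*m), mul_zero,
      GD_ne q (show u + (s : ZMod m) ≠ v + ((d*m+t : ℕ) : ZMod m) by
        rw [dms (m := m) d t]; exact hvt)]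

lemma W_comm (u v : ZMod m) (s t : ℕ) :
    WW q d * (G q u s * D q v t) = (G q u s * D q v t) * WW q d := by
  have lhs : WW q d * (G q u s * D q v t)
      = (lam q d u * csw q u s d) •
          ((G q u d * G q (u + (d : ZMod m)) s) * (D q (u + (s : ZMod m)) d * D q v t)) := by
    rw [WW, Finset.sum_mul, Finset.sum_eq_single u ?_ ?_]
    · rw [smul_mul_assoc, mul_assoc, ← mul_assoc (D q u d), DG q u s d, smul_mul_assoc,
        mul_smul_comm, smul_smul, mul_assoc, mul_assoc, ← mul_assoc (G q (u + (d:ZMod m)) s)]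
    · intro i _ hne
      rw [smul_mul_assoc, mul_assoc, ← mul_assoc (D q i d), DG_ne q hne]
      simp
    · intro h; exact absurd (Finset.mem_univ u) h
  have rhs : (G q u s * D q v t) * WW q d
      = (lam q d v * csw q v d t) •
          ((G q u s * G q (v + (t:ZMod m)) d) * (D q (v + (d:ZMod m)) t * D q v d)) := by
    rw [WW, Finset.mul_sum, Finset.sum_eq_single v ?_ ?_]
    · rw [mul_smul_comm, mul_assoc, ← mul_assoc (D q v t), DG q v d t, smul_mul_assoc,
        mul_smul_comm, smul_smul, mul_assoc, mul_assoc, ← mul_assoc (G q (v + (t:ZMod m)) d)]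
    · intro i _ hne
      rw [mul_smul_comm, mul_assoc, ← mul_assoc (D q v t), DG_ne q (Ne.symm hne)]
      simp
    · intro h; exact absurd (Finset.mem_univ v) h
  rw [lhs, rhs]
  by_cases hvt : u + (s : ZMod m) = v + (t : ZMod m)
  · rw [DD' q hvt d, GG' q rfl s, GG' q hvt.symm d,
      DD' q (rfl : v + (d : ZMod m) = v + (d : ZMod m)) t,
      lam_csw_sd q d u s, lam_csw_ds q d v t, Nat.add_comm d s, Nat.add_comm t d]
    have hCf : Cf q d (u.val + s) = Cf q d (v.val + t) := by
      apply Cf_congr q d hcase hζ1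
      push_cast
      rw [ZMod.natCast_val, ZMod.cast_id, ZMod.natCast_val, ZMod.cast_id]
      exact hvt
    rw [hCf]
  · rw [DD_ne q hvt d, GG_ne q (fun hh => hvt hh.symm) d, mul_zero, smul_zero, zero_mul,
      smul_zero]

omit hcase hζ1

lemma comm_to_center {z : ExtAlg K m q} {n : ℕ}
    (hz : Homog K m q n z)
    (hsign : ∀ n' : ℕ, ((-1:K)^(n * n')) = 1)
    (hcomm : ∀ (u v : ZMod m) (s t : ℕ), z * (G q u s * D q v t) = (G q u s * D q v t) * z) :
    z ∈ ZGr K m q := by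
  apply Algebra.subset_adjoin
  refine ⟨n, hz, ?_⟩
  intro n' g hg
  rw [hsign n', one_smul]
  induction hg using Submodule.span_induction with
  | mem x hx =>
      obtain ⟨i, j, s, t, hst, rfl⟩ := hx
      exact hcomm i j s t
  | zero => rw [mul_zero, zero_mul]
  | add x y hx hy ihx ihy => rw [mul_add, add_mul, ihx, ihy]
  | smul a x hx ihx => rw [mul_smul_comm, smul_mul_assoc, ihx]

lemma homog_X : Homog K m q (d*m) (XX q d) := by
  apply Submodule.sum_mem
  intro i _
  exact Submodule.subset_span
    ⟨i, i + ((d*m : ℕ) : ZMod m), d*m, 0, add_zero _, (Ge q i (d*m)).symm⟩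

lemma homog_Y : Homog K m q (d*m) (YY q d) := by
  apply Submodule.sum_mem
  intro i _
  exact Submodule.subset_span
    ⟨i + ((d*m : ℕ) : ZMod m), i, 0, d*m, zero_add _, (eD q i (d*m)).symm⟩

lemma homog_W : Homog K m q (d+d) (WW q d) := by
  apply Submodule.sum_mem
  intro i _
  exact Submodule.smul_mem _ _ (Submodule.subset_span ⟨i, i, d, d, rfl, rfl⟩)

include hcase hζ1

lemma X_mem : XX q d ∈ ZGr K m q := by
  refine comm_to_center q (homog_X q d) (fun n' => ?_) (X_comm q d hcase hζ1)
  rw [show d*m*n' = m*(d*n') by ring]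
  exact sgn_mul_m hcase _

lemma Y_mem : YY q d ∈ ZGr K m q := by
  refine comm_to_center q (homog_Y q d) (fun n' => ?_) (Y_comm q d hcase hζ1)
  rw [show d*m*n' = m*(d*n') by ring]
  exact sgn_mul_m hcase _

lemma W_mem : WW q d ∈ ZGr K m q := by
  refine comm_to_center q (homog_W q d) (fun n' => ?_) (W_comm q d hcase hζ1)
  exact Even.neg_one_pow ⟨d*n', by ring⟩

end

section
variable (q : ZMod m → K) (d : ℕ)

lemma prod_grid (F : ℕ → K) (a b : ℕ) :
    ∏ k ∈ Finset.range (a*b), F k = ∏ j ∈ Finset.range a, ∏ l ∈ Finset.range b, F (j*b + l) := by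
  induction a with
  | zero => simp
  | succ a ih =>
      rw [show (a+1)*b = a*b + b by ring, Finset.prod_range_add, ih, Finset.prod_range_succ]

lemma Cf_succ (k : ℕ) : Cf q d (k+1) = ((-1:K)^d * Qb q d k) * Cf q d k := by
  rw [Cf, Cf, Finset.prod_range_succ, show (k+1)*d = k*d+d by ring, pow_add]
  ring

lemma Qb_block_prod (hζ1 : (∏ i : ZMod m, q i)^d = 1) (n : ℕ) :
    ∏ j ∈ Finset.range m, Qb q d (n + j*d) = 1 := by
  have h1 : ∀ j : ℕ, Qb q d (n + j*d)
      = ∏ l ∈ Finset.range d, (fun k : ℕ => (fun z => (q z)⁻¹) (((n+1 : ℕ) : ZMod m) + (k : ZMod m))) (j*d + l) := by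
    intro j
    rw [Qb, qb, ← Finset.prod_inv_distrib]
    refine Finset.prod_congr rfl (fun l _ => ?_)
    show (q (((n + j*d + 1 : ℕ) : ZMod m) + (l : ZMod m)))⁻¹
      = (q (((n+1:ℕ) : ZMod m) + ((j*d + l : ℕ) : ZMod m)))⁻¹
    congr 2
    push_cast
    ring
  rw [Finset.prod_congr rfl (fun j _ => h1 j),
    ← prod_grid (fun k : ℕ => (fun z => (q z)⁻¹) (((n+1 : ℕ) : ZMod m) + (k : ZMod m))) m d,
    show m*d = d*m by ring,
    prod_shift_mul (((n+1 : ℕ)) : ZMod m) (fun z => (q z)⁻¹) d,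
    Finset.prod_inv_distrib, inv_pow, hζ1, inv_one]

lemma coeff_step (hcase : Even m ∨ ringChar K = 2) (hζ1 : (∏ i : ZMod m, q i)^d = 1) (n : ℕ) :
    ∏ j ∈ Finset.range m, Cf q d ((n+1) + j*d) = ∏ j ∈ Finset.range m, Cf q d (n + j*d) := by
  have h1 : ∀ j : ℕ, Cf q d ((n+1)+j*d) = ((-1:K)^d * Qb q d (n+j*d)) * Cf q d (n+j*d) :=
    fun j => by rw [show (n+1)+j*d = (n+j*d)+1 by ring, Cf_succ]
  rw [Finset.prod_congr rfl (fun j _ => h1 j), Finset.prod_mul_distrib, Finset.prod_mul_distrib,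
    Finset.prod_const, Finset.card_range, ← pow_mul, show d*m = m*d by ring,
    sgn_mul_m hcase, one_mul, Qb_block_prod q d hζ1 n, one_mul]

lemma coeff_indep (hcase : Even m ∨ ringChar K = 2) (hζ1 : (∏ i : ZMod m, q i)^d = 1) (n : ℕ) :
    ∏ j ∈ Finset.range m, Cf q d (n + j*d) = ∏ j ∈ Finset.range m, Cf q d (j*d) := by
  induction n with
  | zero => simp
  | succ n ih => rw [coeff_step q d hcase hζ1 n, ih]

lemma sign_final (hcase : Even m ∨ ringChar K = 2) (hm : 1 ≤ m) :
    (-1:K)^((m*(m-1)/2) * (d*d)) = (-1:K)^(m*d/2) := by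
  rcases hcase with h | h
  · obtain ⟨m', hm'⟩ := h
    have e1 : m*(m-1) = 2*(m'*(m-1)) := by rw [hm']; ring
    have e2 : m*d = 2*(m'*d) := by rw [hm']; ring
    have h2 : m*(m-1)/2 = m'*(m-1) := by rw [e1, Nat.mul_div_cancel_left _ (by norm_num : 0 < 2)]
    have h3 : m*d/2 = m'*d := by rw [e2, Nat.mul_div_cancel_left _ (by norm_num : 0 < 2)]
    rw [h2, h3]
    have hme : Even m := ⟨m', hm'⟩
    have hodd : ¬ Even (m-1) := by
      rw [Nat.even_sub (by omega : 1 ≤ m)]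
      simp [hme, Nat.not_even_one]
    rcases Nat.even_or_odd m' with hm1 | hm1
    · rw [Even.neg_one_pow ((hm1.mul_right (m-1)).mul_right (d*d)),
        Even.neg_one_pow (hm1.mul_right d)]
    · rcases Nat.even_or_odd d with hd1 | hd1
      · rw [Even.neg_one_pow ((hd1.mul_left d).mul_left (m'*(m-1))),
          Even.neg_one_pow (hd1.mul_left m')]
      · have hodd1 : Odd (m-1) := Nat.not_even_iff_odd.mp hodd
        rw [Odd.neg_one_pow ((hm1.mul hodd1).mul (hd1.mul hd1)),
          Odd.neg_one_pow (hm1.mul hd1)]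
  · have h2 : ((2:ℕ):K) = 0 := by rw [← h]; exact ringChar.Nat.cast_ringChar
    have h3 : (2:K) = 0 := by exact_mod_cast h2
    have hn : (-1:K) = 1 := by linear_combination -h3
    rw [hn, one_pow, one_pow]

lemma coeff_final (hcase : Even m ∨ ringChar K = 2) (hm : 1 ≤ m) :
    ∏ j ∈ Finset.range m, Cf q d (j*d)
      = (-1:K)^(m*d/2)
          * ∏ l ∈ Finset.Icc 1 (m-1), ∏ k ∈ Finset.Icc 1 (l*d), (qblock K m q k d)⁻¹ := by
  have h1 : ∀ j : ℕ, Cf q d (j*d) = (-1:K)^(j*(d*d)) * ∏ k ∈ Finset.range (j*d), Qb q d k :=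
    fun j => by rw [Cf, show j*d*d = j*(d*d) by ring]
  rw [Finset.prod_congr rfl (fun j _ => h1 j), Finset.prod_mul_distrib,
    Finset.prod_pow_eq_pow_sum, ← Finset.sum_mul, Finset.sum_range_id]
  congr 1
  · exact sign_final d hcase hm
  · have hrange : Finset.range m = insert 0 (Finset.Icc 1 (m-1)) := by
      ext x; simp only [Finset.mem_range, Finset.mem_insert, Finset.mem_Icc]; omega
    rw [hrange, Finset.prod_insert (by simp)]
    rw [Nat.zero_mul, Finset.range_zero, Finset.prod_empty, one_mul]
    refine Finset.prod_congr rfl (fun l _ => ?_)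
    refine (Eq.trans (Icc_prod (fun k => (qblock K m q k d)⁻¹) (l*d)) ?_).symm
    exact Finset.prod_congr rfl (fun k _ => by rw [Qb, qblock_eq])

def coeff (r : ℕ) (i : ZMod m) : K := ∏ j ∈ Finset.range r, Cf q d (i.val + j*d)

lemma W_pow (hcase : Even m ∨ ringChar K = 2) (hζ1 : (∏ i : ZMod m, q i)^d = 1) (r : ℕ) :
    WW q d ^ (r+1) = ∑ i : ZMod m, coeff q d (r+1) i • (G q i ((r+1)*d) * D q i ((r+1)*d)) := by
  induction r with
  | zero =>
      rw [pow_one, WW]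
      refine Finset.sum_congr rfl (fun i _ => ?_)
      rw [coeff, Finset.prod_range_one, Nat.zero_mul, Nat.add_zero, ← lam_eq]
      norm_num
  | succ r ih =>
      rw [pow_succ, ih, Finset.sum_mul]
      refine Finset.sum_congr rfl (fun i _ => ?_)
      rw [WW, Finset.mul_sum, Finset.sum_eq_single i ?_ ?_]
      · rw [smul_mul_assoc, mul_smul_comm, smul_smul, mul_assoc, ← mul_assoc (D q i ((r+1)*d)),
          DG q i d ((r+1)*d), smul_mul_assoc, mul_smul_comm, smul_smul,
          mul_assoc (G q (i + (((r+1)*d : ℕ) : ZMod m)) d), ← mul_assoc (G q i ((r+1)*d)),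
          GG' q (rfl : i + (((r+1)*d : ℕ) : ZMod m) = i + (((r+1)*d : ℕ) : ZMod m)) d,
          DD' q (rfl : i + ((d : ℕ) : ZMod m) = i + ((d : ℕ) : ZMod m)) ((r+1)*d),
          mul_assoc (coeff q d (r+1) i), lam_csw_ds q d i ((r+1)*d)]
        have hc : coeff q d (r+1+1) i = coeff q d (r+1) i * Cf q d (i.val + (r+1)*d) := by
          rw [coeff, Finset.prod_range_succ]; rfl
        rw [← hc, show (r+1)*d + d = (r+1+1)*d by ring, show d + (r+1)*d = (r+1+1)*d by ring]
      · intro u _ hne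
        rw [smul_mul_assoc, mul_smul_comm, smul_smul, mul_assoc,
          ← mul_assoc (D q i ((r+1)*d)), DG_ne q (Ne.symm hne)]
        simp
      · intro h; exact absurd (Finset.mem_univ i) h

end

section
variable (q : ZMod m → K) (d : ℕ)

lemma XY : XX q d * YY q d = ∑ i : ZMod m, G q i (d*m) * D q i (d*m) := by
  have h0 := dm0 (m := m) d
  rw [XX, YY, Finset.sum_mul]
  refine Finset.sum_congr rfl (fun i _ => ?_)
  rw [Finset.mul_sum, Finset.sum_eq_single i ?_ ?_]
  · intro j _ hne
    exact GD_ne q (show i + ((d*m : ℕ) : ZMod m) ≠ j + ((d*m : ℕ) : ZMod m) by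
      rw [h0, add_zero, add_zero]; exact Ne.symm hne)
  · intro h; exact absurd (Finset.mem_univ i) h

lemma W_pow_m (hcase : Even m ∨ ringChar K = 2) (hζ1 : (∏ i : ZMod m, q i)^d = 1)
    (hm : 1 ≤ m) :
    WW q d ^ m = ∑ i : ZMod m, coeff q d m i • (G q i (d*m) * D q i (d*m)) := by
  obtain ⟨r, hr⟩ : ∃ r, m = r + 1 := ⟨m - 1, by omega⟩
  have h := W_pow q d hcase hζ1 r
  rw [← hr] at h
  rw [h, show m*d = d*m by ring]

lemma main_eq (hcase : Even m ∨ ringChar K = 2) (hζ1 : (∏ i : ZMod m, q i)^d = 1)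
    (hm : 1 ≤ m) :
    WW q d ^ m
      = ((-1:K)^(m*d/2)
          * ∏ l ∈ Finset.Icc 1 (m-1), ∏ k ∈ Finset.Icc 1 (l*d), (qblock K m q k d)⁻¹)
        • (XX q d * YY q d) := by
  have hcoef : ∀ i : ZMod m, coeff q d m i
      = (-1:K)^(m*d/2)
          * ∏ l ∈ Finset.Icc 1 (m-1), ∏ k ∈ Finset.Icc 1 (l*d), (qblock K m q k d)⁻¹ := by
    intro i
    rw [coeff, coeff_indep q d hcase hζ1 i.val, coeff_final q d hcase hm]
  rw [W_pow_m q d hcase hζ1 hm, XY q d, Finset.smul_sum]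
  exact Finset.sum_congr rfl (fun i _ => by rw [hcoef i])

end
end CE


/-- if `ζ = q_0 ⋯ q_{m-1}` is a primitive `d`-th root of unity and `m` is even
or `char K = 2`, then `x = Σ γ_i^{dm}`, `y = Σ δ_i^{dm}` and
`w = Σ (-1)^{id} ∏_{k=1}^{i}(q_k ⋯ q_{k+d-1})⁻¹ γ_i^d δ_i^d` lie in the graded centre of
`E(Λ_q)`, and `w^m = ε x y` with
`ε = (-1)^{md/2} ∏_{l=1}^{m-1} ∏_{k=1}^{ld} (q_k ⋯ q_{k+d-1})⁻¹`. -/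
theorem central_elements_m_even_or_char_two
    (K : Type) [Field K] (m : ℕ) [NeZero m] (hm : 1 ≤ m)
    (q : ZMod m → K) (hq : ∀ i, q i ≠ 0)
    (d : ℕ) (hd : 0 < d) (hζ : IsPrimitiveRoot (∏ i : ZMod m, q i) d)
    (hcase : Even m ∨ ringChar K = 2) :
    (∑ i : ZMod m, gam K m q i (d * m)) ∈ ZGr K m q ∧
    (∑ i : ZMod m, del K m q i (d * m)) ∈ ZGr K m q ∧
    (∑ i : ZMod m, ((-1 : K) ^ (i.val * d) * wcoef K m q i.val d) •
        (gam K m q i d * del K m q i d)) ∈ ZGr K m q ∧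
    (∑ i : ZMod m, ((-1 : K) ^ (i.val * d) * wcoef K m q i.val d) •
        (gam K m q i d * del K m q i d)) ^ m =
      ((-1 : K) ^ (m * d / 2) *
          ∏ l ∈ Finset.Icc 1 (m - 1), ∏ k ∈ Finset.Icc 1 (l * d), (qblock K m q k d)⁻¹) •
        ((∑ i : ZMod m, gam K m q i (d * m)) * ∑ i : ZMod m, del K m q i (d * m)) := by
  have hζ1 : (∏ i : ZMod m, q i)^d = 1 := hζ.pow_eq_one
  exact ⟨CE.X_mem q d hcase hζ1, CE.Y_mem q d hcase hζ1, CE.W_mem q d hcase hζ1,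
    CE.main_eq q d hcase hζ1 hm⟩
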